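/- If g ∈ ℬ, then limsup_{|z|→1⁻}(1-|z|²)|g'(z)| ≤ dist_ℬ(g, ℬ₀) ≤ limsup_{r→1⁻}‖g - g_r‖_ℬ ≤ 2 limsup_{|z|→1⁻}(1-|z|²)|g'(z)|, where g_r(z) = g(rz). -/

import Mathlib

open Complex MeasureTheory Metric Set Filter Topology

noncomputable section

/-- Möbius involution σ_a(z) = (a-z)/(1 - conj(a) z). -/
def sig (a z : ℂ) : ℂ := (a - z) / (1 - (starRingEnd ℂ) a * z)

/-- p-th power of the Dirichlet-type norm:
`|f(0)|^p + (1/π) ∫_𝔻 |f'(z)|^p (1-|z|²)^{p-1} dA(z)`. -/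
def DpP (p : ℝ) (f : ℂ → ℂ) : ℝ :=
  Norm.norm (f 0) ^ p +
    Real.pi⁻¹ * ∫ z in ball (0 : ℂ) 1,
      Norm.norm (deriv f z) ^ p * (1 - Norm.norm z ^ 2) ^ (p - 1)

/-- The inner F(p,p-1,1) integral at the point `a`:
`(1/π) ∫_𝔻 |F'(z)|^p (1-|z|²)^{p-1} (1-|σ_a(z)|²) dA(z)`. -/
def FpInt (p : ℝ) (F : ℂ → ℂ) (a : ℂ) : ℝ :=
  Real.pi⁻¹ * ∫ z in ball (0 : ℂ) 1,
    Norm.norm (deriv F z) ^ p * (1 - Norm.norm z ^ 2) ^ (p - 1) *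
      (1 - Norm.norm (sig a z) ^ 2)

/-- p-th power of the F(p,p-1,1) norm. -/
def FpP (p : ℝ) (F : ℂ → ℂ) : ℝ :=
  Norm.norm (F 0) ^ p + ⨆ a : ball (0 : ℂ) 1, FpInt p F (a : ℂ)

/-- Volterra operator `T_g f(z) = ∫_0^z f(ξ) g'(ξ) dξ`, parameterized along `[0, z]`. -/
def Tg (g f : ℂ → ℂ) (z : ℂ) : ℂ :=
  ∫ t in (0 : ℝ)..1, f ((t : ℂ) * z) * deriv g ((t : ℂ) * z) * z

/-- Companion operator `I_g f(z) = ∫_0^z f'(ξ) g(ξ) dξ`. -/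
def Ig (g f : ℂ → ℂ) (z : ℂ) : ℂ :=
  ∫ t in (0 : ℝ)..1, deriv f ((t : ℂ) * z) * g ((t : ℂ) * z) * z

/-- Carleson square over the arc of normalized length `h` centered at `e^{iθ}`. -/
def box (θ h : ℝ) : Set ℂ :=
  {z | ∃ r t : ℝ, 1 - h ≤ r ∧ r < 1 ∧ |t| ≤ Real.pi * h ∧
      z = (r : ℂ) * Complex.exp (Complex.I * ((θ : ℂ) + (t : ℂ)))}

/-- Bloch seminorm `sup_{z∈𝔻} (1-|z|²)|g'(z)|`. -/
def BlochN (g : ℂ → ℂ) : ℝ :=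
  ⨆ z : ball (0 : ℂ) 1, (1 - Norm.norm (z : ℂ) ^ 2) * Norm.norm (deriv g (z : ℂ))

/-- `limsup_{|z|→1⁻} (1-|z|²)|g'(z)|`. -/
def limsupB (g : ℂ → ℂ) : ℝ :=
  Filter.limsup (fun z => (1 - Norm.norm z ^ 2) * Norm.norm (deriv g z))
    (Filter.comap (Norm.norm : ℂ → ℝ) (𝓝[<] (1 : ℝ)))

/-- Membership in the little Bloch space ℬ₀. -/
def LittleBloch (h : ℂ → ℂ) : Prop :=
  DifferentiableOn ℂ h (ball 0 1) ∧
    (∃ M : ℝ, ∀ z ∈ ball (0 : ℂ) 1,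
      (1 - Norm.norm z ^ 2) * Norm.norm (deriv h z) ≤ M) ∧
    Tendsto (fun z => (1 - Norm.norm z ^ 2) * Norm.norm (deriv h z))
      (Filter.comap (Norm.norm : ℂ → ℝ) (𝓝[<] (1 : ℝ))) (𝓝 0)

/-- Distance from `g` to the little Bloch space in the Bloch seminorm. -/
def distB (g : ℂ → ℂ) : ℝ :=
  sInf ((fun h => BlochN (fun z => g z - h z)) '' {h | LittleBloch h})


abbrev FF : Filter ℂ := Filter.comap (Norm.norm : ℂ → ℝ) (𝓝[<] (1 : ℝ))

instance FF_neBot : NeBot FF := by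
  apply Filter.comap_neBot
  intro t ht
  rw [mem_nhdsLT_iff_exists_Ioo_subset] at ht
  obtain ⟨l, hl, hsub⟩ := ht
  refine ⟨(((max l 0 + 1)/2 : ℝ) : ℂ), hsub ?_⟩
  have h0 : (0:ℝ) ≤ (max l 0 + 1)/2 := by positivity
  rw [Complex.norm_of_nonneg h0]
  have hm : max l 0 < 1 := max_lt hl one_pos
  exact ⟨by linarith [le_max_left l 0], by linarith⟩

lemma evAnn {a : ℝ} (ha : a < 1) :
    ∀ᶠ z in FF, a < Norm.norm z ∧ Norm.norm z < 1 := by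
  have h : Ioo a 1 ∈ 𝓝[<] (1:ℝ) := Ioo_mem_nhdsLT_of_mem ⟨ha, le_refl 1⟩
  exact Filter.preimage_mem_comap h

lemma evBall : ∀ᶠ z in FF, z ∈ ball (0:ℂ) 1 :=
  (evAnn (by norm_num : (0:ℝ) < 1)).mono fun z hz => mem_ball_zero_iff.2 hz.2

lemma absSub (a b : ℂ) : Norm.norm (a - b) ≤ Norm.norm a + Norm.norm b := by
  exact norm_sub_le a b

lemma keyIneq {r : ℝ} (hr0 : 0 ≤ r) (hr1 : r ≤ 1) {z : ℂ} (hz : Norm.norm z ≤ 1) :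
    r * (1 - Norm.norm z ^ 2) ≤ 1 - Norm.norm ((r:ℂ)*z) ^ 2 := by
  rw [norm_mul, Complex.norm_of_nonneg hr0, mul_pow]
  nlinarith [norm_nonneg z, sq_nonneg (Norm.norm z),
    mul_nonneg (mul_nonneg hr0 (sub_nonneg.2 hr1)) (sq_nonneg (Norm.norm z))]

lemma absScale (r : ℝ) (hr0 : 0 ≤ r) (z : ℂ) :
    Norm.norm ((r:ℂ)*z) = r * Norm.norm z := by
  rw [norm_mul, Complex.norm_of_nonneg hr0]

lemma derivScale {g : ℂ → ℂ} {r : ℝ} {z : ℂ} (hga : DifferentiableAt ℂ g ((r:ℂ)*z)) :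
    deriv (fun w => g ((r:ℂ)*w)) z = (r:ℂ) * deriv g ((r:ℂ)*z) := by
  have h1 : HasDerivAt (fun w : ℂ => (r:ℂ)*w) (r:ℂ) z := by
    simpa using (hasDerivAt_id z).const_mul (r:ℂ)
  have h2 : HasDerivAt (fun w => g ((r:ℂ)*w)) (deriv g ((r:ℂ)*z) * (r:ℂ)) z :=
    (hga.hasDerivAt).comp z h1
  rw [h2.deriv, mul_comm]


lemma blochN_nonneg (f : ℂ → ℂ) : 0 ≤ BlochN f := by
  apply Real.iSup_nonneg
  intro z
  have hz : Norm.norm (z:ℂ) < 1 := by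
    have := mem_ball_zero_iff.1 z.2; exact this
  have : (0:ℝ) ≤ 1 - Norm.norm (z:ℂ) ^ 2 := by nlinarith [norm_nonneg (z:ℂ)]
  exact mul_nonneg this (norm_nonneg _)

lemma blochN_le {f : ℂ → ℂ} {C : ℝ}
    (hC : ∀ z ∈ ball (0:ℂ) 1,
      (1 - Norm.norm z ^ 2) * Norm.norm (deriv f z) ≤ C) : BlochN f ≤ C := by
  have hne : Nonempty ↥(ball (0:ℂ) 1) := ⟨⟨0, by simp⟩⟩
  exact ciSup_le fun z => hC z z.2

lemma le_blochN {f : ℂ → ℂ} {C : ℝ}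
    (hC : ∀ z ∈ ball (0:ℂ) 1,
      (1 - Norm.norm z ^ 2) * Norm.norm (deriv f z) ≤ C)
    {z : ℂ} (hz : z ∈ ball (0:ℂ) 1) :
    (1 - Norm.norm z ^ 2) * Norm.norm (deriv f z) ≤ BlochN f := by
  have hbdd : BddAbove (Set.range fun w : ↥(ball (0:ℂ) 1) =>
      (1 - Norm.norm (w:ℂ) ^ 2) * Norm.norm (deriv f (w:ℂ))) := by
    refine ⟨C, ?_⟩
    rintro _ ⟨w, rfl⟩
    exact hC w w.2
  exact le_ciSup hbdd ⟨z, hz⟩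

lemma littleBloch_zero : LittleBloch (fun _ => (0:ℂ)) := by
  refine ⟨(differentiable_const (0:ℂ)).differentiableOn, ⟨0, fun z _ => by simp⟩, ?_⟩
  have h : (fun z : ℂ => (1 - Norm.norm z ^ 2) * Norm.norm (deriv (fun _ => (0:ℂ)) z))
      = fun _ => 0 := by funext z; simp
  rw [h]
  exact tendsto_const_nhds

lemma absLt {z : ℂ} (hz : z ∈ ball (0:ℂ) 1) : Norm.norm z < 1 := by
  have := mem_ball_zero_iff.1 hz; exact this

lemma memBall {z : ℂ} (hz : Norm.norm z < 1) : z ∈ ball (0:ℂ) 1 := by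
  rw [mem_ball_zero_iff]; exact hz

lemma oneSubSq_nonneg {z : ℂ} (hz : z ∈ ball (0:ℂ) 1) : (0:ℝ) ≤ 1 - Norm.norm z ^ 2 := by
  have := absLt hz; nlinarith [norm_nonneg z]

lemma scaleMem {r : ℝ} (hr0 : 0 ≤ r) (hr1 : r ≤ 1) {z : ℂ} (hz : z ∈ ball (0:ℂ) 1) :
    (r:ℂ)*z ∈ ball (0:ℂ) 1 := by
  apply memBall
  rw [absScale r hr0]
  calc r * Norm.norm z ≤ 1 * Norm.norm z :=
        mul_le_mul_of_nonneg_right hr1 (norm_nonneg z)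
    _ < 1 := by rw [one_mul]; exact absLt hz

lemma derivDiffScale {g : ℂ → ℂ} (hg : DifferentiableOn ℂ g (ball 0 1))
    {r : ℝ} (hr0 : 0 ≤ r) (hr1 : r ≤ 1) {z : ℂ} (hz : z ∈ ball (0:ℂ) 1) :
    deriv (fun w => g w - g ((r:ℂ)*w)) z = deriv g z - (r:ℂ) * deriv g ((r:ℂ)*z) := by
  have h1 : DifferentiableAt ℂ g z := hg.differentiableAt (isOpen_ball.mem_nhds hz)
  have ho : DifferentiableAt ℂ g ((r:ℂ)*z) :=
    hg.differentiableAt (isOpen_ball.mem_nhds (scaleMem hr0 hr1 hz))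
  have h2 : DifferentiableAt ℂ (fun w => g ((r:ℂ)*w)) z :=
    ho.comp z (differentiableAt_id.const_mul _)
  rw [deriv_fun_sub h1 h2, derivScale ho]

lemma twoTerm {g : ℂ → ℂ} (hg : DifferentiableOn ℂ g (ball 0 1))
    {r : ℝ} (hr0 : 0 ≤ r) (hr1 : r ≤ 1) {z : ℂ} (hz : z ∈ ball (0:ℂ) 1) :
    (1 - Norm.norm z ^ 2) * Norm.norm (deriv (fun w => g w - g ((r:ℂ)*w)) z)
      ≤ (1 - Norm.norm z ^ 2) * Norm.norm (deriv g z)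
        + (1 - Norm.norm ((r:ℂ)*z) ^ 2) * Norm.norm (deriv g ((r:ℂ)*z)) := by
  rw [derivDiffScale hg hr0 hr1 hz]
  have h6 := oneSubSq_nonneg hz
  have habs : Norm.norm (deriv g z - (r:ℂ) * deriv g ((r:ℂ)*z))
      ≤ Norm.norm (deriv g z) + r * Norm.norm (deriv g ((r:ℂ)*z)) := by
    refine le_trans (absSub _ _) ?_
    rw [norm_mul, Complex.norm_of_nonneg hr0]
  have hkey := keyIneq hr0 hr1 (le_of_lt (absLt hz))
  have h7 := norm_nonneg (deriv g ((r:ℂ)*z))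
  nlinarith [mul_le_mul_of_nonneg_left habs h6,
    mul_le_mul_of_nonneg_right hkey h7]

set_option maxHeartbeats 1000000 in
/-- distance formula from a Bloch function to the little Bloch space. -/
theorem stmt17 (g : ℂ → ℂ) (hg : DifferentiableOn ℂ g (ball 0 1))
    (hB : ∃ M : ℝ, ∀ z ∈ ball (0 : ℂ) 1,
      (1 - Norm.norm z ^ 2) * Norm.norm (deriv g z) ≤ M) :
    limsupB g ≤ distB g ∧
      distB g ≤
        Filter.limsup (fun r : ℝ => BlochN (fun z => g z - g ((r : ℂ) * z)))
          (𝓝[<] (1 : ℝ)) ∧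
      Filter.limsup (fun r : ℝ => BlochN (fun z => g z - g ((r : ℂ) * z)))
          (𝓝[<] (1 : ℝ)) ≤ 2 * limsupB g := by
  obtain ⟨M, hM⟩ := hB
  have hM0 : 0 ≤ M := by
    have h := hM 0 (by simp)
    simp only [norm_zero] at h
    nlinarith [norm_nonneg (deriv g 0)]
  -- coboundedness of the Bloch quotient along FF
  have hcob : Filter.IsCoboundedUnder (· ≤ ·) FF
      (fun z => (1 - Norm.norm z ^ 2) * Norm.norm (deriv g z)) := by
    apply isCoboundedUnder_le_of_eventually_le FF (x := 0)
    exact evBall.mono fun z hz => mul_nonneg (oneSubSq_nonneg hz) (norm_nonneg _)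
  have hbdd : Filter.IsBoundedUnder (· ≤ ·) FF
      (fun z => (1 - Norm.norm z ^ 2) * Norm.norm (deriv g z)) :=
    ⟨M, evBall.mono fun z hz => hM z hz⟩
  refine ⟨?_, ?_, ?_⟩
  · -- Part 1 : limsupB g ≤ distB g
    rw [distB]
    have hne : ((fun h => BlochN (fun z => g z - h z)) '' {h | LittleBloch h}).Nonempty :=
      ⟨_, Set.mem_image_of_mem _ (littleBloch_zero : LittleBloch (fun _ => (0:ℂ)))⟩
    apply le_csInf hne
    rintro b ⟨h, hh, rfl⟩
    obtain ⟨hdiff, ⟨Mh, hMh⟩, htend⟩ := hh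
    apply le_of_forall_pos_le_add
    intro ε hε
    have hgh : ∀ z ∈ ball (0:ℂ) 1,
        (1 - Norm.norm z ^ 2) * Norm.norm (deriv (fun w => g w - h w) z) ≤ M + Mh := by
      intro z hz
      have h1 : DifferentiableAt ℂ g z := hg.differentiableAt (isOpen_ball.mem_nhds hz)
      have h2 : DifferentiableAt ℂ h z := hdiff.differentiableAt (isOpen_ball.mem_nhds hz)
      rw [deriv_fun_sub h1 h2]
      calc (1 - Norm.norm z ^ 2) * Norm.norm (deriv g z - deriv h z)
          ≤ (1 - Norm.norm z ^ 2) * (Norm.norm (deriv g z) + Norm.norm (deriv h z)) :=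
            mul_le_mul_of_nonneg_left (absSub _ _) (oneSubSq_nonneg hz)
        _ = (1 - Norm.norm z ^ 2) * Norm.norm (deriv g z)
              + (1 - Norm.norm z ^ 2) * Norm.norm (deriv h z) := by ring
        _ ≤ M + Mh := add_le_add (hM z hz) (hMh z hz)
    apply Filter.limsup_le_of_le hcob
    have hev2 : ∀ᶠ z in FF,
        (1 - Norm.norm z ^ 2) * Norm.norm (deriv h z) < ε :=
      htend.eventually_lt_const hε
    filter_upwards [evBall, hev2] with z hz hze
    have h1 : DifferentiableAt ℂ g z := hg.differentiableAt (isOpen_ball.mem_nhds hz)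
    have h2 : DifferentiableAt ℂ h z := hdiff.differentiableAt (isOpen_ball.mem_nhds hz)
    have hd : deriv (fun w => g w - h w) z = deriv g z - deriv h z := (h1.hasDerivAt.sub h2.hasDerivAt).deriv
    have habs : Norm.norm (deriv g z)
        ≤ Norm.norm (deriv (fun w => g w - h w) z) + Norm.norm (deriv h z) := by
      rw [hd]
      have : deriv g z = (deriv g z - deriv h z) + deriv h z := by ring
      calc Norm.norm (deriv g z)
          = Norm.norm ((deriv g z - deriv h z) + deriv h z) := by rw [← this]
        _ ≤ _ := norm_add_le _ _
    have hS := le_blochN hgh hz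
    calc (1 - Norm.norm z ^ 2) * Norm.norm (deriv g z)
        ≤ (1 - Norm.norm z ^ 2) * Norm.norm (deriv (fun w => g w - h w) z)
            + (1 - Norm.norm z ^ 2) * Norm.norm (deriv h z) := by
          nlinarith [mul_le_mul_of_nonneg_left habs (oneSubSq_nonneg hz)]
      _ ≤ BlochN (fun w => g w - h w) + ε := add_le_add hS (le_of_lt hze)
  · -- Part 2 : distB g ≤ limsup_r BlochN (g - g_r)
    have hLB : ∀ r : ℝ, 0 < r → r < 1 → LittleBloch (fun z => g ((r:ℂ)*z)) := by
      intro r hr0 hr1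
      refine ⟨?_, ⟨M, ?_⟩, ?_⟩
      · intro z hz
        have hz' : z ∈ ball (0:ℂ) 1 := hz
        exact ((hg.differentiableAt
          (isOpen_ball.mem_nhds (scaleMem hr0.le hr1.le hz'))).comp z
          (differentiableAt_id.const_mul _)).differentiableWithinAt
      · intro z hz
        rw [derivScale (hg.differentiableAt
          (isOpen_ball.mem_nhds (scaleMem hr0.le hr1.le hz)))]
        rw [norm_mul, Complex.norm_of_nonneg hr0.le]
        have hkey := keyIneq hr0.le hr1.le (le_of_lt (absLt hz))
        have h7 := norm_nonneg (deriv g ((r:ℂ)*z))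
        calc (1 - Norm.norm z ^ 2) * (r * Norm.norm (deriv g ((r:ℂ)*z)))
            = (r * (1 - Norm.norm z ^ 2)) * Norm.norm (deriv g ((r:ℂ)*z)) := by ring
          _ ≤ (1 - Norm.norm ((r:ℂ)*z) ^ 2) * Norm.norm (deriv g ((r:ℂ)*z)) :=
              mul_le_mul_of_nonneg_right hkey h7
          _ ≤ M := hM _ (scaleMem hr0.le hr1.le hz)
      · -- tendsto 0
        have hden : (0:ℝ) < 1 - r^2 := by nlinarith
        apply squeeze_zero' (f := fun z : ℂ =>
            (1 - Norm.norm z ^ 2) * Norm.norm (deriv (fun w => g ((r:ℂ)*w)) z))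
          (g := fun z : ℂ => (1 - Norm.norm z ^ 2) * (r * (M / (1 - r^2))))
        · exact evBall.mono fun z hz =>
            mul_nonneg (oneSubSq_nonneg hz) (norm_nonneg _)
        · filter_upwards [evBall] with z hz
          rw [derivScale (hg.differentiableAt
            (isOpen_ball.mem_nhds (scaleMem hr0.le hr1.le hz)))]
          rw [norm_mul, Complex.norm_of_nonneg hr0.le]
          apply mul_le_mul_of_nonneg_left ?_ (oneSubSq_nonneg hz)
          apply mul_le_mul_of_nonneg_left ?_ hr0.le
          -- |g'(rz)| ≤ M / (1-r²)
          rw [le_div_iff₀ hden]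
          have h5 := hM _ (scaleMem hr0.le hr1.le hz)
          have h8 : Norm.norm ((r:ℂ)*z) ≤ r := by
            rw [absScale r hr0.le]
            calc r * Norm.norm z ≤ r * 1 :=
                  mul_le_mul_of_nonneg_left (le_of_lt (absLt hz)) hr0.le
              _ = r := mul_one r
          have h9 := norm_nonneg ((r:ℂ)*z)
          have h11 : 1 - r^2 ≤ 1 - Norm.norm ((r:ℂ)*z)^2 := by nlinarith
          nlinarith [mul_le_mul_of_nonneg_right h11 (norm_nonneg (deriv g ((r:ℂ)*z)))]
        · have habs : Tendsto (Norm.norm : ℂ → ℝ) FF (𝓝 1) :=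
            tendsto_comap.mono_right nhdsWithin_le_nhds
          have hcont2 : Continuous (fun x : ℝ => (1 - x ^ 2) * (r * (M / (1 - r^2)))) :=
            (continuous_const.sub (continuous_pow 2)).mul continuous_const
          have h10 : Tendsto (fun z : ℂ => (1 - Norm.norm z ^ 2) * (r * (M / (1 - r^2)))) FF
              (𝓝 ((1 - (1:ℝ) ^ 2) * (r * (M / (1 - r^2))))) := (hcont2.tendsto 1).comp habs
          have h12 : ((1 - (1:ℝ)^2) * (r * (M/(1-r^2)))) = 0 := by norm_num
          rw [h12] at h10
          exact h10
    have hBd : Filter.IsBoundedUnder (· ≤ ·) (𝓝[<] (1:ℝ))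
        (fun r : ℝ => BlochN (fun z => g z - g ((r:ℂ)*z))) := by
      refine ⟨2*M, ?_⟩
      rw [Filter.eventually_map]
      filter_upwards [Ioo_mem_nhdsLT_of_mem (show (1:ℝ) ∈ Ioc (0:ℝ) 1 from ⟨one_pos, le_refl 1⟩)]
        with r hr
      apply blochN_le
      intro z hz
      refine le_trans (twoTerm hg hr.1.le hr.2.le hz) ?_
      have := hM z hz
      have := hM _ (scaleMem hr.1.le hr.2.le hz)
      linarith
    have hle : ∀ᶠ r : ℝ in 𝓝[<] (1:ℝ), distB g ≤ BlochN (fun z => g z - g ((r:ℂ)*z)) := by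
      filter_upwards [Ioo_mem_nhdsLT_of_mem (show (1:ℝ) ∈ Ioc (0:ℝ) 1 from ⟨one_pos, le_refl 1⟩)]
        with r hr
      rw [distB]
      apply csInf_le
      · refine ⟨0, ?_⟩
        rintro _ ⟨h, hh, rfl⟩
        exact blochN_nonneg _
      · exact ⟨fun z => g ((r:ℂ)*z), hLB r hr.1 hr.2, rfl⟩
    exact le_limsup_of_frequently_le hle.frequently hBd
  · -- Part 3 : limsup_r BlochN (g - g_r) ≤ 2 * limsupB g
    have hL0 : 0 ≤ limsupB g := by
      refine le_limsup_of_frequently_le ?_ hbdd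
      exact (evBall.mono fun z hz =>
        mul_nonneg (oneSubSq_nonneg hz) (norm_nonneg _)).frequently
    have hcob2 : Filter.IsCoboundedUnder (· ≤ ·) (𝓝[<] (1:ℝ))
        (fun r : ℝ => BlochN (fun z => g z - g ((r:ℂ)*z))) :=
      isCoboundedUnder_le_of_le _ (fun r => blochN_nonneg _)
    have claim : ∀ ε : ℝ, 0 < ε →
        Filter.limsup (fun r : ℝ => BlochN (fun z => g z - g ((r:ℂ)*z))) (𝓝[<] (1:ℝ))
          ≤ 2 * limsupB g + 3 * ε := by
      intro ε hε
      have hlt : limsupB g < limsupB g + ε := by linarith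
      have hev : ∀ᶠ z in FF,
          (1 - Norm.norm z ^ 2) * Norm.norm (deriv g z) < limsupB g + ε :=
        eventually_lt_of_limsup_lt hlt hbdd
      rw [Filter.eventually_comap] at hev
      obtain ⟨l, hl, hsub⟩ := mem_nhdsLT_iff_exists_Ioo_subset.1 hev
      set a := max l 0 with hadef
      have ha1 : a < 1 := max_lt hl one_pos
      have ha0 : (0:ℝ) ≤ a := le_max_right l 0
      have hann : ∀ z : ℂ, a < Norm.norm z → Norm.norm z < 1 →
          (1 - Norm.norm z ^ 2) * Norm.norm (deriv g z) < limsupB g + ε := by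
        intro z h1 h2
        exact hsub ⟨lt_of_le_of_lt (le_max_left l 0) h1, h2⟩ z rfl
      set ρ := (a+1)/2 with hρdef
      have hρa : a < ρ := by rw [hρdef]; linarith
      have hρ1 : ρ < 1 := by rw [hρdef]; linarith
      have hρ0 : 0 < ρ := by rw [hρdef]; linarith
      have hKsub : closedBall (0:ℂ) ρ ⊆ ball 0 1 := closedBall_subset_ball hρ1
      have hcont : ContinuousOn (deriv g) (closedBall (0:ℂ) ρ) :=
        (((hg.analyticOnNhd isOpen_ball).deriv).continuousOn).mono hKsub
      have hK := isCompact_closedBall (0:ℂ) ρ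
      obtain ⟨C, hC⟩ := hK.exists_bound_of_continuousOn hcont
      have hC0 : 0 ≤ C :=
        le_trans (norm_nonneg _) (hC 0 (mem_closedBall_self hρ0.le))
      have hUC := hK.uniformContinuousOn_of_continuous hcont
      rw [Metric.uniformContinuousOn_iff] at hUC
      obtain ⟨δ, hδ0, hδ⟩ := hUC ε hε
      set r₀ := max (max (a/ρ) (1-δ)) (max (1 - ε/(C+1)) 0) with hr₀def
      have hr₀1 : r₀ < 1 := by
        apply max_lt (max_lt ?_ ?_) (max_lt ?_ one_pos)
        · exact (div_lt_one hρ0).2 hρa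
        · linarith
        · have : 0 < ε/(C+1) := by positivity
          linarith
      apply Filter.limsup_le_of_le hcob2
      filter_upwards [Ioo_mem_nhdsLT hr₀1] with r hr
      have hr1 : r < 1 := hr.2
      have hr0 : 0 ≤ r := le_trans (le_trans (le_max_right _ 0) (le_max_right _ _)) hr.1.le
      have hra : a/ρ < r := lt_of_le_of_lt (le_trans (le_max_left _ _) (le_max_left _ _)) hr.1
      have hrδ : 1-δ < r := lt_of_le_of_lt (le_trans (le_max_right _ _) (le_max_left _ _)) hr.1
      have hrε : 1 - ε/(C+1) < r :=
        lt_of_le_of_lt (le_trans (le_max_left _ _) (le_max_right _ _)) hr.1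
      apply blochN_le
      intro z hz
      by_cases hcase : Norm.norm z ≤ ρ
      · -- compact case
        have hzK : z ∈ closedBall (0:ℂ) ρ := by
          rw [mem_closedBall_zero_iff]; exact hcase
        have habsrz : Norm.norm ((r:ℂ)*z) = r * Norm.norm z := absScale r hr0 z
        have hrzK : (r:ℂ)*z ∈ closedBall (0:ℂ) ρ := by
          rw [mem_closedBall_zero_iff, habsrz]
          calc r * Norm.norm z ≤ 1 * Norm.norm z :=
                mul_le_mul_of_nonneg_right hr1.le (norm_nonneg z)
            _ ≤ ρ := by rw [one_mul]; exact hcase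
        have hdist : dist z ((r:ℂ)*z) < δ := by
          rw [Complex.dist_eq]
          have he : z - (r:ℂ)*z = (((1-r : ℝ)):ℂ)*z := by push_cast; ring
          rw [he, norm_mul, Complex.norm_of_nonneg (by linarith : (0:ℝ) ≤ 1-r)]
          have hz1 : Norm.norm z ≤ 1 := le_trans hcase hρ1.le
          nlinarith [norm_nonneg z]
        have h1 := hδ z hzK ((r:ℂ)*z) hrzK hdist
        rw [Complex.dist_eq] at h1
        have h2 : Norm.norm (deriv g ((r:ℂ)*z)) ≤ C := by
          have := hC _ hrzK; exact this
        rw [derivDiffScale hg hr0 hr1.le hz]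
        have hsplit : deriv g z - (r:ℂ) * deriv g ((r:ℂ)*z)
            = (deriv g z - deriv g ((r:ℂ)*z)) + (((1-r : ℝ)):ℂ) * deriv g ((r:ℂ)*z) := by
          push_cast; ring
        have habs2 : Norm.norm (deriv g z - (r:ℂ) * deriv g ((r:ℂ)*z)) ≤ ε + ε := by
          rw [hsplit]
          refine le_trans (norm_add_le _ _) ?_
          apply add_le_add (le_of_lt h1)
          rw [norm_mul, Complex.norm_of_nonneg (by linarith : (0:ℝ) ≤ 1-r)]
          have h13 : (1-r)*(C+1) < ε := by
            have h14 : 1-r < ε/(C+1) := by linarith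
            exact (lt_div_iff₀ (by positivity)).1 h14
          nlinarith [norm_nonneg (deriv g ((r:ℂ)*z))]
        have h6 := oneSubSq_nonneg hz
        have h7 : 1 - Norm.norm z^2 ≤ 1 := by nlinarith [norm_nonneg z]
        nlinarith [norm_nonneg (deriv g z - (r:ℂ) * deriv g ((r:ℂ)*z))]
      · -- annulus case
        push_neg at hcase
        have hz1 := absLt hz
        have hNz := hann z (lt_trans hρa hcase) hz1
        have habsrz : Norm.norm ((r:ℂ)*z) = r * Norm.norm z := absScale r hr0 z
        have hrz1 : Norm.norm ((r:ℂ)*z) < 1 := by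
          rw [habsrz]
          calc r * Norm.norm z ≤ 1 * Norm.norm z :=
                mul_le_mul_of_nonneg_right hr1.le (norm_nonneg z)
            _ < 1 := by rw [one_mul]; exact hz1
        have hrza : a < Norm.norm ((r:ℂ)*z) := by
          rw [habsrz]
          have h15 : a/ρ * ρ = a := div_mul_cancel₀ a hρ0.ne'
          have h16 : a/ρ * ρ < r * ρ := mul_lt_mul_of_pos_right hra hρ0
          have h17 : r * ρ ≤ r * Norm.norm z :=
            mul_le_mul_of_nonneg_left hcase.le hr0
          linarith
        have hNrz := hann _ hrza hrz1
        refine le_trans (twoTerm hg hr0 hr1.le hz) ?_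
        linarith
    apply le_of_forall_pos_le_add
    intro ε hε
    have := claim (ε/3) (by linarith)
    linarith
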